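/- Let A be an integral domain which is an ℝ-algebra. For all f, h ∈ Quaternion A, one has h * f * star h = (star h) * f * h if and only if either the scalar part of h is zero, or the vector parts f_v and h_v are linearly dependent over A, i.e. there exist α, β ∈ A, not both zero, with α·f_v + β·h_v = 0. (Proposition 5.3.) -/

import Mathlib

open Quaternion

theorem conj_eq_conj_reverse_iff {A : Type*} [CommRing A] [IsDomain A] [Algebra ℝ A]
    (f h : Quaternion A) :
    h * f * star h = star h * f * h ↔
      h.re = 0 ∨
        ∃ α β : A, (α ≠ 0 ∨ β ≠ 0) ∧
          (α : Quaternion A) * f.im + (β : Quaternion A) * h.im = 0 := by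
  haveI : CharZero A := charZero_of_injective_algebraMap (algebraMap ℝ A).injective
  have h4 : (4 : A) ≠ 0 := by norm_num
  set a1 := h.imI; set a2 := h.imJ; set a3 := h.imK
  set b1 := f.imI; set b2 := f.imJ; set b3 := f.imK
  have key : h * f * star h = star h * f * h ↔
      (h.re * (a2 * b3 - a3 * b2) = 0 ∧ h.re * (a3 * b1 - a1 * b3) = 0 ∧
        h.re * (a1 * b2 - a2 * b1) = 0) := by
    rw [Quaternion.ext_iff]
    simp only [Quaternion.re_mul, Quaternion.imI_mul, Quaternion.imJ_mul, Quaternion.imK_mul,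
      Quaternion.re_star, Quaternion.imI_star, Quaternion.imJ_star, Quaternion.imK_star]
    constructor
    · rintro ⟨e0, e1, e2, e3⟩
      refine ⟨mul_left_cancel₀ h4 ?_, mul_left_cancel₀ h4 ?_, mul_left_cancel₀ h4 ?_⟩
      · linear_combination e1
      · linear_combination e2
      · linear_combination e3
    · rintro ⟨m1, m2, m3⟩
      refine ⟨by ring, ?_, ?_, ?_⟩
      · linear_combination 4 * m1
      · linear_combination 4 * m2
      · linear_combination 4 * m3
  rw [key]
  have dep : (a2 * b3 - a3 * b2 = 0 ∧ a3 * b1 - a1 * b3 = 0 ∧ a1 * b2 - a2 * b1 = 0) ↔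
      ∃ α β : A, (α ≠ 0 ∨ β ≠ 0) ∧
        (α : Quaternion A) * f.im + (β : Quaternion A) * h.im = 0 := by
    have comp : ∀ α β : A, (α : Quaternion A) * f.im + (β : Quaternion A) * h.im = 0 ↔
        (α * b1 + β * a1 = 0 ∧ α * b2 + β * a2 = 0 ∧ α * b3 + β * a3 = 0) := by
      intro α β
      rw [Quaternion.ext_iff]
      simp only [Quaternion.re_add, Quaternion.imI_add, Quaternion.imJ_add, Quaternion.imK_add,
        Quaternion.re_mul, Quaternion.imI_mul, Quaternion.imJ_mul, Quaternion.imK_mul,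
        Quaternion.re_coe, Quaternion.imI_coe, Quaternion.imJ_coe, Quaternion.imK_coe,
        Quaternion.re_im, Quaternion.imI_im, Quaternion.imJ_im, Quaternion.imK_im,
        Quaternion.re_zero, Quaternion.imI_zero, Quaternion.imJ_zero, Quaternion.imK_zero]
      constructor
      · rintro ⟨-, e1, e2, e3⟩
        exact ⟨by linear_combination e1, by linear_combination e2, by linear_combination e3⟩
      · rintro ⟨e1, e2, e3⟩
        exact ⟨by ring, by linear_combination e1, by linear_combination e2, by linear_combination e3⟩
    constructor
    · rintro ⟨m1, m2, m3⟩
      by_cases hb1 : b1 ≠ 0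
      · refine ⟨a1, -b1, Or.inr (by simpa using hb1), (comp _ _).2 ⟨by ring, ?_, ?_⟩⟩
        · linear_combination m3
        · linear_combination -m2
      · by_cases hb2 : b2 ≠ 0
        · refine ⟨a2, -b2, Or.inr (by simpa using hb2), (comp _ _).2 ⟨?_, by ring, ?_⟩⟩
          · linear_combination -m3
          · linear_combination m1
        · by_cases hb3 : b3 ≠ 0
          · refine ⟨a3, -b3, Or.inr (by simpa using hb3), (comp _ _).2 ⟨?_, ?_, by ring⟩⟩
            · linear_combination m2
            · linear_combination -m1
          · push_neg at hb1 hb2 hb3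
            exact ⟨1, 0, Or.inl one_ne_zero, (comp _ _).2 ⟨by simp [hb1], by simp [hb2], by simp [hb3]⟩⟩
    · rintro ⟨α, β, hne, heq⟩
      obtain ⟨e1, e2, e3⟩ := (comp α β).1 heq
      rcases hne with hα | hβ
      · refine ⟨mul_left_cancel₀ hα ?_, mul_left_cancel₀ hα ?_, mul_left_cancel₀ hα ?_⟩
        · linear_combination a2 * e3 - a3 * e2
        · linear_combination a3 * e1 - a1 * e3
        · linear_combination a1 * e2 - a2 * e1
      · refine ⟨mul_left_cancel₀ hβ ?_, mul_left_cancel₀ hβ ?_, mul_left_cancel₀ hβ ?_⟩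
        · linear_combination b3 * e2 - b2 * e3
        · linear_combination b1 * e3 - b3 * e1
        · linear_combination b2 * e1 - b1 * e2
  rw [← dep]
  constructor
  · rintro ⟨m1, m2, m3⟩
    rcases mul_eq_zero.1 m1 with h0 | c1
    · exact Or.inl h0
    rcases mul_eq_zero.1 m2 with h0 | c2
    · exact Or.inl h0
    rcases mul_eq_zero.1 m3 with h0 | c3
    · exact Or.inl h0
    exact Or.inr ⟨c1, c2, c3⟩
  · rintro (h0 | ⟨c1, c2, c3⟩)
    · simp [h0]
    · simp [c1, c2, c3]
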